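/- Let K be the splitting field over ℚ of the polynomial f(t) = t³ + 12t² − 64. Then f is irreducible over ℚ, K/ℚ is a Galois extension of degree 3 whose Galois group is cyclic of order 3, and 2 is not a norm from K to ℚ: there is no x ∈ K with N_{K/ℚ}(x) = 2. -/

import Mathlib

open Polynomial IntermediateField

private lemma no_int_sol (n : ℤ) (h : n^3 + 12*n^2 - 64 = 0) : False := by
  have h1 : n ≤ 2 := by nlinarith [sq_nonneg n, sq_nonneg (n-2), sq_nonneg (n+12)]
  have h2 : -12 ≤ n := by nlinarith [sq_nonneg n, sq_nonneg (n+12)]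
  interval_cases n <;> norm_num at h

private lemma no_rat_root (r : ℚ) (h : r^3 + 12*r^2 - 64 = 0) : False := by
  have hd0 : (r.den : ℚ) ≠ 0 := by
    simpa using r.den_nz
  have hnum : (r.num : ℚ) = r * (r.den : ℚ) := by
    rw [← div_eq_iff hd0]
    exact Rat.num_div_den r
  have key : r.num^3 + 12*r.num^2*(r.den:ℤ) - 64*(r.den:ℤ)^3 = 0 := by
    have : ((r.num^3 + 12*r.num^2*(r.den:ℤ) - 64*(r.den:ℤ)^3 : ℤ) : ℚ)
        = (r^3 + 12*r^2 - 64) * (r.den:ℚ)^3 := by push_cast [hnum]; ring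
    rw [h, zero_mul] at this; exact_mod_cast this
  have hdvd : (r.den:ℤ) ∣ r.num^3 := ⟨64*(r.den:ℤ)^2 - 12*r.num^2, by linarith⟩
  have hcopZ : IsCoprime (r.num) ((r.den:ℤ)) := by
    rw [Int.isCoprime_iff_gcd_eq_one]
    exact r.reduced
  have hu : IsUnit ((r.den:ℤ)) := (hcopZ.symm.pow_right (n := 3)).isUnit_of_dvd' dvd_rfl hdvd
  have hden1 : r.den = 1 := by
    rcases Int.isUnit_iff.mp hu with h' | h'
    · exact_mod_cast h'
    · exfalso; omega
  rw [hden1] at key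
  apply no_int_sol r.num
  push_cast at key
  linarith

private lemma mod2_lemma : ∀ a b c : ZMod 2,
    a^3 + 6*a^2*c - 3*a*b^2 + 3*a*b*c + 9*a*c^2 - b^3 + 3*b*c^2 + c^3 = 0 →
    a = 0 ∧ b = 0 ∧ c = 0 := by decide

private lemma descent : ∀ n : ℕ, ∀ s p q r : ℤ, s.natAbs = n → s ≠ 0 →
    p^3 + 6*p^2*r - 3*p*q^2 + 3*p*q*r + 9*p*r^2 - q^3 + 3*q*r^2 + r^3 = 2*s^3 → False := by
  intro n
  induction n using Nat.strong_induction_on with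
  | _ n ih =>
    intro s p q r hn hs h
    have hcast := congrArg (fun z : ℤ => (z : ZMod 2)) h
    push_cast at hcast
    have h2 : (p:ZMod 2)^3 + 6*(p:ZMod 2)^2*(r:ZMod 2) - 3*(p:ZMod 2)*(q:ZMod 2)^2
        + 3*(p:ZMod 2)*(q:ZMod 2)*(r:ZMod 2) + 9*(p:ZMod 2)*(r:ZMod 2)^2 - (q:ZMod 2)^3
        + 3*(q:ZMod 2)*(r:ZMod 2)^2 + (r:ZMod 2)^3 = 0 := by
      rw [hcast]
      have : (2 : ZMod 2) = 0 := rfl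
      rw [this]; ring
    obtain ⟨ha, hb, hc⟩ := mod2_lemma _ _ _ h2
    obtain ⟨p', rfl⟩ := (ZMod.intCast_zmod_eq_zero_iff_dvd p 2).mp ha
    obtain ⟨q', rfl⟩ := (ZMod.intCast_zmod_eq_zero_iff_dvd q 2).mp hb
    obtain ⟨r', rfl⟩ := (ZMod.intCast_zmod_eq_zero_iff_dvd r 2).mp hc
    have hs3 : s^3 = 4*(p'^3 + 6*p'^2*r' - 3*p'*q'^2 + 3*p'*q'*r' + 9*p'*r'^2 - q'^3
        + 3*q'*r'^2 + r'^3) := by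
      have h8 : 2*(s^3) = 2*(4*(p'^3 + 6*p'^2*r' - 3*p'*q'^2 + 3*p'*q'*r' + 9*p'*r'^2 - q'^3
        + 3*q'*r'^2 + r'^3)) := by linear_combination -h
      exact mul_left_cancel₀ (by norm_num : (2:ℤ) ≠ 0) h8
    have h2s : (2:ℤ) ∣ s := by
      have : (2:ℤ) ∣ s^3 := ⟨2*(p'^3 + 6*p'^2*r' - 3*p'*q'^2 + 3*p'*q'*r' + 9*p'*r'^2 - q'^3
        + 3*q'*r'^2 + r'^3), by linarith⟩
      exact Int.prime_two.dvd_of_dvd_pow this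
    obtain ⟨s', rfl⟩ := h2s
    have hs' : s' ≠ 0 := by rintro rfl; simp at hs
    apply ih s'.natAbs ?_ s' p' q' r' rfl hs' ?_
    · have h1 : s'.natAbs ≠ 0 := Int.natAbs_ne_zero.mpr hs'
      rw [← hn]
      omega
    · have h4 : 4*(p'^3 + 6*p'^2*r' - 3*p'*q'^2 + 3*p'*q'*r' + 9*p'*r'^2 - q'^3
        + 3*q'*r'^2 + r'^3) = 4*(2*s'^3) := by linear_combination -hs3
      exact mul_left_cancel₀ (by norm_num : (4:ℤ) ≠ 0) h4

private lemma hf_deg : (X ^ 3 + 12 * X ^ 2 - 64 : ℚ[X]).natDegree = 3 := by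
  compute_degree!

private lemma hf_monic : (X ^ 3 + 12 * X ^ 2 - 64 : ℚ[X]).Monic := by
  monicity!

private lemma hf_irr : Irreducible (X ^ 3 + 12 * X ^ 2 - 64 : ℚ[X]) := by
  rw [irreducible_iff_roots_eq_zero_of_degree_le_three (by norm_num [hf_deg]) (by norm_num [hf_deg])]
  rw [Multiset.eq_zero_iff_forall_notMem]
  intro r hr
  rw [mem_roots hf_monic.ne_zero] at hr
  have h : r^3 + 12*r^2 - 64 = 0 := by
    have := hr
    simp only [IsRoot, eval_sub, eval_add, eval_mul, eval_pow, eval_X, eval_ofNat] at this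
    linarith
  exact no_rat_root r h

private lemma key :
    Module.finrank ℚ (X ^ 3 + 12 * X ^ 2 - 64 : ℚ[X]).SplittingField = 3 ∧
    ∃ β : (X ^ 3 + 12 * X ^ 2 - 64 : ℚ[X]).SplittingField,
      β ^ 3 = 3 * β - 1 ∧ Algebra.adjoin ℚ {β} = ⊤ := by
  set f : ℚ[X] := X ^ 3 + 12 * X ^ 2 - 64 with hfdef
  set L := f.SplittingField with hLdef
  haveI : CharZero L := charZero_of_injective_algebraMap (algebraMap ℚ L).injective
  obtain ⟨α, hα0⟩ := Splits.exists_eval_eq_zero (SplittingField.splits f)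
    (by rw [degree_map, degree_eq_natDegree hf_monic.ne_zero, hf_deg]; norm_num)
  have hαaev : aeval α f = 0 := by rwa [aeval_def, ← eval_map]
  have hαeval : α ^ 3 + 12 * α ^ 2 - 64 = 0 := by
    have h2 : aeval α (X ^ 3 + 12 * X ^ 2 - 64 : ℚ[X]) = 0 := hαaev
    simpa only [map_sub, map_add, map_mul, map_pow, aeval_X, map_ofNat] using h2
  have hαne : α ≠ 0 := by
    rintro rfl
    rw [show ((0:L)^3 + 12*(0:L)^2 - 64 : L) = -64 by ring] at hαeval
    have : (64 : L) ≠ 0 := by norm_num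
    exact this (by linear_combination -hαeval)
  set β : L := -4 / α with hβdef
  have hb : β ^ 3 = 3 * β - 1 := by
    rw [hβdef]
    rw [div_eq_mul_inv]
    have hu : α * α⁻¹ = 1 := mul_inv_cancel₀ hαne
    linear_combination (α⁻¹)^3 * hαeval + (-(1 + α*α⁻¹ + (α*α⁻¹)^2) - 12*α⁻¹*(1 + α*α⁻¹)) * hu
  have hfact : ∀ t : L, (t - (4*β^2 - 12)) * (t - (-4*β^2 - 4*β + 4)) * (t - (4*β - 4))
      = t^3 + 12*t^2 - 64 := by
    intro t
    linear_combination (-16*t*β - 16*t + 64*β^2 - 128) * hb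
  have hadj : Algebra.adjoin ℚ {β} = ⊤ := by
    rw [eq_top_iff]
    refine le_trans (le_of_eq (Polynomial.SplittingField.adjoin_rootSet f).symm) ?_
    apply Algebra.adjoin_le
    intro t ht
    rw [mem_rootSet] at ht
    have ht' : t^3 + 12*t^2 - 64 = 0 := by
      have h2 : aeval t (X ^ 3 + 12 * X ^ 2 - 64 : ℚ[X]) = 0 := ht.2
      simpa only [map_sub, map_add, map_mul, map_pow, aeval_X, map_ofNat] using h2
    have hprod : (t - (4*β^2 - 12)) * (t - (-4*β^2 - 4*β + 4)) * (t - (4*β - 4)) = 0 := by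
      rw [hfact t, ht']
    rw [Algebra.adjoin_singleton_eq_range_aeval]
    rcases mul_eq_zero.mp hprod with h | h
    · rcases mul_eq_zero.mp h with h' | h'
      · have : t = 4*β^2 - 12 := by linear_combination h'
        rw [this]
        exact ⟨4*X^2 - 12, by simp [map_sub, map_mul, map_pow, map_ofNat]⟩
      · have : t = -4*β^2 - 4*β + 4 := by linear_combination h'
        rw [this]
        exact ⟨-4*X^2 - 4*X + 4, by simp [map_sub, map_add, map_mul, map_pow, map_ofNat]⟩
    · have : t = 4*β - 4 := by linear_combination h
      rw [this]
      exact ⟨4*X - 4, by simp [map_sub, map_mul, map_ofNat]⟩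
  have hminα : minpoly ℚ α = f := (minpoly.eq_of_irreducible_of_monic hf_irr hαaev hf_monic).symm
  have hIFα : (ℚ⟮α⟯ : IntermediateField ℚ L) = ⊤ := by
    rw [eq_top_iff]
    intro x _
    have hx : x ∈ Algebra.adjoin ℚ {β} := by rw [hadj]; trivial
    have hle : Algebra.adjoin ℚ {β} ≤ ℚ⟮α⟯.toSubalgebra := by
      apply Algebra.adjoin_le
      intro y hy
      rw [Set.mem_singleton_iff] at hy
      subst hy
      have hαmem : α ∈ ℚ⟮α⟯ := mem_adjoin_simple_self ℚ α
      have h4 : (-4 : L) ∈ ℚ⟮α⟯ := by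
        have := ℚ⟮α⟯.algebraMap_mem (-4 : ℚ)
        rwa [map_neg, map_ofNat] at this
      show β ∈ ℚ⟮α⟯.toSubalgebra
      rw [IntermediateField.mem_toSubalgebra]
      exact div_mem h4 hαmem
    exact hle hx
  have hrank : Module.finrank ℚ L = 3 := by
    have h1 := IntermediateField.adjoin.finrank (IsIntegral.of_finite ℚ α)
    rw [hminα, hf_deg] at h1
    rw [hIFα, IntermediateField.finrank_top'] at h1
    exact h1
  exact ⟨hrank, β, hb, hadj⟩

private lemma rat_num_eq (p : ℚ) : (p.num : ℚ) = p * (p.den : ℚ) := by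
  have hd0 : (p.den : ℚ) ≠ 0 := by simpa using p.den_nz
  rw [← div_eq_iff hd0]
  exact Rat.num_div_den p

private lemma not_norm_general {L : Type*} [Field L] [Algebra ℚ L] [FiniteDimensional ℚ L]
    [IsGalois ℚ L] (hrank : Module.finrank ℚ L = 3) (β : L) (hb : β ^ 3 = 3 * β - 1)
    (hadj : Algebra.adjoin ℚ {β} = ⊤) (x : L) (hx : Algebra.norm ℚ x = 2) : False := by
  classical
  -- β generates L, minpoly degree 3
  have hIFβ : (ℚ⟮β⟯ : IntermediateField ℚ L) = ⊤ := by
    rw [eq_top_iff]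
    intro y _
    exact IntermediateField.algebra_adjoin_le_adjoin ℚ {β} (by rw [hadj]; trivial)
  have hβdeg : (minpoly ℚ β).natDegree = 3 := by
    have h1 := IntermediateField.adjoin.finrank (IsIntegral.of_finite ℚ β)
    rw [hIFβ, IntermediateField.finrank_top'] at h1
    rw [← h1]
    exact hrank
  -- write x = p + q β + r β²
  obtain ⟨p, q, r, hxval⟩ : ∃ p q r : ℚ,
      x = algebraMap ℚ L p + algebraMap ℚ L q * β + algebraMap ℚ L r * β ^ 2 := by
    obtain ⟨P, hP⟩ : ∃ P : ℚ[X], aeval β P = x := by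
      have hx' : x ∈ Algebra.adjoin ℚ {β} := by rw [hadj]; trivial
      rwa [Algebra.adjoin_singleton_eq_range_aeval, AlgHom.mem_range] at hx'
    have hgmonic : (X ^ 3 - 3 * X + 1 : ℚ[X]).Monic := by monicity!
    have hgdeg : (X ^ 3 - 3 * X + 1 : ℚ[X]).natDegree = 3 := by compute_degree!
    have hgβ : aeval β (X ^ 3 - 3 * X + 1 : ℚ[X]) = 0 := by
      have h2 : aeval β (X ^ 3 - 3 * X + 1 : ℚ[X]) = β ^ 3 - 3 * β + 1 := by
        simp only [map_add, map_sub, map_mul, map_pow, aeval_X, map_one, map_ofNat]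
      rw [h2, hb]; ring
    have hxR : aeval β (P %ₘ (X ^ 3 - 3 * X + 1 : ℚ[X])) = x := by
      have hdiv := modByMonic_add_div P (X ^ 3 - 3 * X + 1 : ℚ[X])
      calc aeval β (P %ₘ (X ^ 3 - 3 * X + 1 : ℚ[X]))
          = aeval β (P %ₘ (X ^ 3 - 3 * X + 1 : ℚ[X])) + aeval β (X ^ 3 - 3 * X + 1 : ℚ[X])
            * aeval β (P /ₘ (X ^ 3 - 3 * X + 1 : ℚ[X])) := by rw [hgβ]; ring
        _ = aeval β P := by rw [← map_mul, ← map_add, hdiv]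
        _ = x := hP
    have hRdeg : (P %ₘ (X ^ 3 - 3 * X + 1 : ℚ[X])).natDegree < 3 := by
      have h1 : (X ^ 3 - 3 * X + 1 : ℚ[X]) ≠ 1 := by
        intro h
        rw [h] at hgdeg
        simp at hgdeg
      have := natDegree_modByMonic_lt P hgmonic h1
      rwa [hgdeg] at this
    refine ⟨(P %ₘ (X ^ 3 - 3 * X + 1 : ℚ[X])).coeff 0, (P %ₘ (X ^ 3 - 3 * X + 1 : ℚ[X])).coeff 1,
      (P %ₘ (X ^ 3 - 3 * X + 1 : ℚ[X])).coeff 2, ?_⟩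
    rw [← hxR, aeval_eq_sum_range' hRdeg β]
    simp only [Finset.sum_range_succ, Finset.sum_range_zero, zero_add, pow_zero, pow_one,
      Algebra.smul_def, mul_one]
  -- Galois conjugates of β
  have hroot : ∀ σ : L ≃ₐ[ℚ] L, (σ β) ^ 3 = 3 * (σ β) - 1 := by
    intro σ
    have h1 := congrArg σ hb
    simpa only [map_pow, map_sub, map_mul, map_ofNat, map_one] using h1
  have hgfact : ∀ t : L, (t - β) * (t - (β ^ 2 - 2)) * (t - (-β ^ 2 - β + 2))
      = t ^ 3 - 3 * t + 1 := by
    intro t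
    linear_combination (-t * β - t + β ^ 2 + β - 1) * hb
  have hmem : ∀ σ : L ≃ₐ[ℚ] L, σ β ∈ ({β, β ^ 2 - 2, -β ^ 2 - β + 2} : Finset L) := by
    intro σ
    have h0 : (σ β - β) * (σ β - (β ^ 2 - 2)) * (σ β - (-β ^ 2 - β + 2)) = 0 := by
      rw [hgfact]
      linear_combination hroot σ
    simp only [Finset.mem_insert, Finset.mem_singleton]
    rcases mul_eq_zero.mp h0 with h | h
    · rcases mul_eq_zero.mp h with h' | h'
      · left; linear_combination h'
      · right; left; linear_combination h'
    · right; right; linear_combination h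
  -- distinctness
  have hann : ∀ Rq : ℚ[X], Rq ≠ 0 → Rq.natDegree ≤ 2 → aeval β Rq ≠ 0 := by
    intro Rq h0 hdeg hev
    have h1 := minpoly.degree_le_of_ne_zero ℚ β h0 hev
    have h6 := natDegree_le_natDegree h1
    rw [hβdeg] at h6
    omega
  have hd1 : β ≠ β ^ 2 - 2 := by
    intro h
    apply hann (X ^ 2 - X - 2) ?_ (by compute_degree!)
    · have h2 : aeval β (X ^ 2 - X - 2 : ℚ[X]) = β ^ 2 - β - 2 := by
        simp only [map_sub, map_pow, aeval_X, map_ofNat]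
      rw [h2]
      linear_combination -h
    · intro hh
      have := congrArg (Polynomial.eval 0) hh
      norm_num at this
  have hd2 : β ≠ -β ^ 2 - β + 2 := by
    intro h
    apply hann (X ^ 2 + 2 * X - 2) ?_ (by compute_degree!)
    · have h2 : aeval β (X ^ 2 + 2 * X - 2 : ℚ[X]) = β ^ 2 + 2 * β - 2 := by
        simp only [map_add, map_sub, map_mul, map_pow, aeval_X, map_ofNat]
      rw [h2]
      linear_combination h
    · intro hh
      have := congrArg (Polynomial.eval 0) hh
      norm_num at this
  have hd3 : (β ^ 2 - 2 : L) ≠ -β ^ 2 - β + 2 := by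
    intro h
    apply hann (2 * X ^ 2 + X - 4) ?_ (by compute_degree!)
    · have h2 : aeval β (2 * X ^ 2 + X - 4 : ℚ[X]) = 2 * β ^ 2 + β - 4 := by
        simp only [map_add, map_sub, map_mul, map_pow, aeval_X, map_ofNat]
      rw [h2]
      linear_combination h
    · intro hh
      have := congrArg (Polynomial.eval 0) hh
      norm_num at this
  -- injectivity of evaluation at β
  have hinj : Function.Injective (fun σ : L ≃ₐ[ℚ] L => σ β) := by
    intro σ τ h
    have heq : AlgHom.equalizer (σ : L →ₐ[ℚ] L) τ = ⊤ := by
      rw [eq_top_iff, ← hadj]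
      apply Algebra.adjoin_le
      intro y hy
      rw [Set.mem_singleton_iff] at hy
      subst hy
      rw [SetLike.mem_coe, AlgHom.mem_equalizer]
      exact h
    exact AlgEquiv.coe_algHom_injective (AlgHom.equalizer_eq_top.mp heq)
  have hcardG : Fintype.card (L ≃ₐ[ℚ] L) = 3 := by
    rw [← Nat.card_eq_fintype_card, IsGalois.card_aut_eq_finrank, hrank]
  have himg : (Finset.univ.image fun σ : L ≃ₐ[ℚ] L => σ β)
      = ({β, β ^ 2 - 2, -β ^ 2 - β + 2} : Finset L) := by
    apply Finset.eq_of_subset_of_card_le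
    · intro t ht
      rw [Finset.mem_image] at ht
      obtain ⟨σ, _, rfl⟩ := ht
      exact hmem σ
    · rw [Finset.card_image_of_injective _ hinj, Finset.card_univ, hcardG]
      apply le_trans (Finset.card_insert_le _ _)
      apply Nat.succ_le_succ
      apply le_trans (Finset.card_insert_le _ _)
      simp
  have hnorm := Algebra.norm_eq_prod_automorphisms (K := ℚ) x
  have hprodform : algebraMap ℚ L (Algebra.norm ℚ x) =
      (algebraMap ℚ L p + algebraMap ℚ L q * β + algebraMap ℚ L r * β ^ 2)
      * (algebraMap ℚ L p + algebraMap ℚ L q * (β ^ 2 - 2) + algebraMap ℚ L r * (β ^ 2 - 2) ^ 2)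
      * (algebraMap ℚ L p + algebraMap ℚ L q * (-β ^ 2 - β + 2)
          + algebraMap ℚ L r * (-β ^ 2 - β + 2) ^ 2) := by
    rw [hnorm]
    have hσx : ∀ σ : L ≃ₐ[ℚ] L, σ x
        = algebraMap ℚ L p + algebraMap ℚ L q * (σ β) + algebraMap ℚ L r * (σ β) ^ 2 := by
      intro σ
      rw [hxval]
      simp only [map_add, map_mul, map_pow, AlgEquiv.commutes]
    calc (∏ σ : L ≃ₐ[ℚ] L, σ x)
        = ∏ σ : L ≃ₐ[ℚ] L, (algebraMap ℚ L p + algebraMap ℚ L q * (σ β)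
            + algebraMap ℚ L r * (σ β) ^ 2) := Finset.prod_congr rfl fun σ _ => hσx σ
      _ = ∏ t ∈ Finset.univ.image (fun σ : L ≃ₐ[ℚ] L => σ β),
            (algebraMap ℚ L p + algebraMap ℚ L q * t + algebraMap ℚ L r * t ^ 2) := by
          rw [Finset.prod_image]
          intro a _ b _ hab
          exact hinj hab
      _ = _ := by
          rw [himg]
          rw [Finset.prod_insert (by simp [hd1, hd2]), Finset.prod_insert (by simp [hd3]),
            Finset.prod_singleton]
          ring
  have hNval : Algebra.norm ℚ x
      = p ^ 3 + 6 * p ^ 2 * r - 3 * p * q ^ 2 + 3 * p * q * r + 9 * p * r ^ 2 - q ^ 3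
        + 3 * q * r ^ 2 + r ^ 3 := by
    apply (algebraMap ℚ L).injective
    rw [hprodform]
    simp only [map_add, map_sub, map_mul, map_pow, map_ofNat]
    linear_combination (-(algebraMap ℚ L r)^3 - 3*(algebraMap ℚ L r)^3*β
      + 7*(algebraMap ℚ L r)^3*β^2 + 6*(algebraMap ℚ L r)^3*β^3 - 7*(algebraMap ℚ L r)^3*β^4
      - 4*(algebraMap ℚ L r)^3*β^5 + 2*(algebraMap ℚ L r)^3*β^6 + (algebraMap ℚ L r)^3*β^7
      - 3*(algebraMap ℚ L q)*(algebraMap ℚ L r)^2 + 7*(algebraMap ℚ L q)*(algebraMap ℚ L r)^2*β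
      + 5*(algebraMap ℚ L q)*(algebraMap ℚ L r)^2*β^2 - 6*(algebraMap ℚ L q)*(algebraMap ℚ L r)^2*β^3
      - 3*(algebraMap ℚ L q)*(algebraMap ℚ L r)^2*β^4 + 2*(algebraMap ℚ L q)*(algebraMap ℚ L r)^2*β^5
      + (algebraMap ℚ L q)*(algebraMap ℚ L r)^2*β^6 + (algebraMap ℚ L q)^3
      - (algebraMap ℚ L q)^3*β - (algebraMap ℚ L q)^3*β^2
      + 7*(algebraMap ℚ L p)*(algebraMap ℚ L r)^2 + 5*(algebraMap ℚ L p)*(algebraMap ℚ L r)^2*β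
      - 5*(algebraMap ℚ L p)*(algebraMap ℚ L r)^2*β^2 - 2*(algebraMap ℚ L p)*(algebraMap ℚ L r)^2*β^3
      + 2*(algebraMap ℚ L p)*(algebraMap ℚ L r)^2*β^4 + (algebraMap ℚ L p)*(algebraMap ℚ L r)^2*β^5
      - 3*(algebraMap ℚ L p)*(algebraMap ℚ L q)*(algebraMap ℚ L r)
      + 3*(algebraMap ℚ L p)*(algebraMap ℚ L q)*(algebraMap ℚ L r)*β
      + 3*(algebraMap ℚ L p)*(algebraMap ℚ L q)*(algebraMap ℚ L r)*β^2
      - (algebraMap ℚ L p)*(algebraMap ℚ L q)^2 - (algebraMap ℚ L p)*(algebraMap ℚ L q)^2*β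
      + 2*(algebraMap ℚ L p)^2*(algebraMap ℚ L r) + 2*(algebraMap ℚ L p)^2*(algebraMap ℚ L r)*β) * hb
  rw [hx] at hNval
  have hF2 : p ^ 3 + 6 * p ^ 2 * r - 3 * p * q ^ 2 + 3 * p * q * r + 9 * p * r ^ 2 - q ^ 3
      + 3 * q * r ^ 2 + r ^ 3 = 2 := hNval.symm
  -- clear denominators
  have hdz0 : ((p.den : ℤ) * q.den * r.den) ≠ 0 := by
    have h1 : ((p.den:ℤ)) ≠ 0 := by exact_mod_cast p.den_nz
    have h2 : ((q.den:ℤ)) ≠ 0 := by exact_mod_cast q.den_nz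
    have h3 : ((r.den:ℤ)) ≠ 0 := by exact_mod_cast r.den_nz
    exact mul_ne_zero (mul_ne_zero h1 h2) h3
  have hZ : (p.num * q.den * r.den) ^ 3 + 6 * (p.num * q.den * r.den) ^ 2 * ((p.den : ℤ) * q.den * r.num)
      - 3 * (p.num * q.den * r.den) * ((p.den : ℤ) * q.num * r.den) ^ 2
      + 3 * (p.num * q.den * r.den) * ((p.den : ℤ) * q.num * r.den) * ((p.den : ℤ) * q.den * r.num)
      + 9 * (p.num * q.den * r.den) * ((p.den : ℤ) * q.den * r.num) ^ 2
      - ((p.den : ℤ) * q.num * r.den) ^ 3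
      + 3 * ((p.den : ℤ) * q.num * r.den) * ((p.den : ℤ) * q.den * r.num) ^ 2
      + ((p.den : ℤ) * q.den * r.num) ^ 3 = 2 * ((p.den : ℤ) * q.den * r.den) ^ 3 := by
    have hq : (((p.num * q.den * r.den) ^ 3 + 6 * (p.num * q.den * r.den) ^ 2 * ((p.den : ℤ) * q.den * r.num)
      - 3 * (p.num * q.den * r.den) * ((p.den : ℤ) * q.num * r.den) ^ 2
      + 3 * (p.num * q.den * r.den) * ((p.den : ℤ) * q.num * r.den) * ((p.den : ℤ) * q.den * r.num)
      + 9 * (p.num * q.den * r.den) * ((p.den : ℤ) * q.den * r.num) ^ 2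
      - ((p.den : ℤ) * q.num * r.den) ^ 3
      + 3 * ((p.den : ℤ) * q.num * r.den) * ((p.den : ℤ) * q.den * r.num) ^ 2
      + ((p.den : ℤ) * q.den * r.num) ^ 3 : ℤ) : ℚ)
        = 2 * (((p.den : ℤ) * q.den * r.den : ℤ) : ℚ) ^ 3 := by
      push_cast
      rw [rat_num_eq p, rat_num_eq q, rat_num_eq r]
      linear_combination ((p.den:ℚ) * q.den * r.den) ^ 3 * hF2
    exact_mod_cast hq
  exact descent _ _ _ _ _ rfl hdz0 hZ

/-- The polynomial `f = t³ + 12t² − 64` is irreducible over `ℚ`, its splitting field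
`K` is a cyclic Galois extension of `ℚ` of degree `3`, and `2` is not a norm from
`K` to `ℚ`. -/
theorem splitting_field_cubic_cyclic_two_not_norm :
    Irreducible (X ^ 3 + 12 * X ^ 2 - 64 : ℚ[X]) ∧
    IsGalois ℚ (X ^ 3 + 12 * X ^ 2 - 64 : ℚ[X]).SplittingField ∧
    Module.finrank ℚ (X ^ 3 + 12 * X ^ 2 - 64 : ℚ[X]).SplittingField = 3 ∧
    IsCyclic ((X ^ 3 + 12 * X ^ 2 - 64 : ℚ[X]).SplittingField ≃ₐ[ℚ]
      (X ^ 3 + 12 * X ^ 2 - 64 : ℚ[X]).SplittingField) ∧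
    Nat.card ((X ^ 3 + 12 * X ^ 2 - 64 : ℚ[X]).SplittingField ≃ₐ[ℚ]
      (X ^ 3 + 12 * X ^ 2 - 64 : ℚ[X]).SplittingField) = 3 ∧
    ¬ ∃ x : (X ^ 3 + 12 * X ^ 2 - 64 : ℚ[X]).SplittingField,
        Algebra.norm ℚ x = 2 := by
  obtain ⟨hrank, β, hb, hadj⟩ := key
  haveI hGal : IsGalois ℚ (X ^ 3 + 12 * X ^ 2 - 64 : ℚ[X]).SplittingField :=
    @IsGalois.of_separable_splitting_field ℚ _ _ _ _ _
      (Polynomial.IsSplittingField.splittingField _) hf_irr.separable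
  have hcard : Nat.card ((X ^ 3 + 12 * X ^ 2 - 64 : ℚ[X]).SplittingField ≃ₐ[ℚ]
      (X ^ 3 + 12 * X ^ 2 - 64 : ℚ[X]).SplittingField) = 3 := by
    rw [IsGalois.card_aut_eq_finrank, hrank]
  haveI : Fact (Nat.Prime 3) := ⟨by norm_num⟩
  refine ⟨hf_irr, hGal, hrank, isCyclic_of_prime_card hcard, hcard, ?_⟩
  rintro ⟨x, hx⟩
  exact not_norm_general hrank β hb hadj x hx
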